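/- arXiv:2402.13390 — 2 statements merged into one kernel-verified Lean document; each statement's English description precedes it below -/
import Mathlib

section
/- A Hermitian twisted cartesian product (g1 ⋈ g2, J, k) is balanced (Lee form θ ≡ 0) if and only if θ1(x) = tr(ρ1(x)) for all x ∈ g1 and θ2(a) = tr(ρ2(a)) for all a ∈ g2, where θ1, θ2 are the Lee forms of the factors. -/
open scoped BigOperators

section TCPDefs

variable {V V₁ V₂ W : Type*} [AddCommGroup V] [Module ℝ V]
  [AddCommGroup V₁] [Module ℝ V₁] [AddCommGroup V₂] [Module ℝ V₂]
  [AddCommGroup W] [Module ℝ W]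

/-- Real-bilinearity of a two-argument map. -/
def IsBilinMap (f : V₁ → V₂ → W) : Prop :=
  (∀ x y z, f (x + y) z = f x z + f y z) ∧ (∀ (c : ℝ) x z, f (c • x) z = c • f x z) ∧
  (∀ x y z, f x (y + z) = f x y + f x z) ∧ (∀ (c : ℝ) x z, f x (c • z) = c • f x z)

/-- The Jacobi identity for a bracket. -/
def Jacobi (l : V → V → V) : Prop :=
  ∀ u v w, l (l u v) w + l (l v w) u + l (l w u) v = 0

/-- A (real) Lie bracket: bilinear, antisymmetric, Jacobi. -/
def IsLieBracket (l : V → V → V) : Prop :=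
  IsBilinMap l ∧ (∀ u v, l u v = -l v u) ∧ Jacobi l

/-- D is a derivation of the bracket l. -/
def IsDeriv (l : V → V → V) (D : V → V) : Prop :=
  ∀ u v, D (l u v) = l (D u) v + l u (D v)

/-- Compatibility of the couple (ρ1, ρ2). -/
def Compat (ρ1 : V₁ → V₂ → V₂) (ρ2 : V₂ → V₁ → V₁) : Prop :=
  (∀ (x : V₁) (a b : V₂), ρ1 (ρ2 a x) b = ρ1 (ρ2 b x) a) ∧
  (∀ (x y : V₁) (a : V₂), ρ2 (ρ1 x a) y = ρ2 (ρ1 y a) x)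

/-- The twisted cartesian product bracket on V₁ × V₂. -/
def twBr (l1 : V₁ → V₁ → V₁) (l2 : V₂ → V₂ → V₂)
    (ρ1 : V₁ → V₂ → V₂) (ρ2 : V₂ → V₁ → V₁) (u v : V₁ × V₂) : V₁ × V₂ :=
  (l1 u.1 v.1 + ρ2 u.2 v.1 - ρ2 v.2 u.1, l2 u.2 v.2 + ρ1 u.1 v.2 - ρ1 v.1 u.2)

/-- The product almost complex structure. -/
def prodJ (J1 : V₁ → V₁) (J2 : V₂ → V₂) (u : V₁ × V₂) : V₁ × V₂ := (J1 u.1, J2 u.2)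

/-- The product metric. -/
def prodK (k1 : V₁ → V₁ → ℝ) (k2 : V₂ → V₂ → ℝ) (u v : V₁ × V₂) : ℝ :=
  k1 u.1 v.1 + k2 u.2 v.2

/-- Nijenhuis tensor of J with respect to the bracket l. -/
def nijenhuis (l : V → V → V) (J : V → V) (u v : V) : V :=
  l (J u) (J v) - l u v - J (l (J u) v + l u (J v))

/-- Fundamental 2-form ω(u,v) = k(Ju, v). -/
def fund (k : V → V → ℝ) (J : V → V) (u v : V) : ℝ := k (J u) v

/-- Chevalley–Eilenberg differential of a 2-form. -/
def d2 (l : V → V → V) (ω : V → V → ℝ) (u v w : V) : ℝ :=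
  -ω (l u v) w + ω (l u w) v - ω (l v w) u

/-- Chevalley–Eilenberg differential of a 1-form. -/
def d1 (l : V → V → V) (θ : V → ℝ) (u v : V) : ℝ := -θ (l u v)

/-- Wedge product of a 1-form with a 2-form, evaluated on three vectors. -/
def wedge12 (θ : V → ℝ) (ω : V → V → ℝ) (u v w : V) : ℝ :=
  θ u * ω v w - θ v * ω u w + θ w * ω u v

/-- The Koszul formula characterizing the Levi-Civita product of (g, k). -/
def IsLeviCivita (k : V → V → ℝ) (l : V → V → V) (nab : V → V → V) : Prop :=
  ∀ u v w, 2 * k (nab u v) w = k (l u v) w - k (l v w) u - k (l u w) v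

/-- Codifferential of a 2-form ω relative to a family E (an orthonormal basis)
    and a Levi-Civita product nab:  d*ω(X) = −Σ_i (∇_{E_i}ω)(E_i, X). -/
def codiff {ι : Type*} [Fintype ι] (E : ι → V) (nab : V → V → V)
    (ω : V → V → ℝ) (X : V) : ℝ :=
  -∑ i, (-(ω (nab (E i) (E i)) X) - ω (E i) (nab (E i) X))

/-- Lee form θ = −d*ω ∘ J. -/
def leeForm {ι : Type*} [Fintype ι] (E : ι → V) (nab : V → V → V)
    (k : V → V → ℝ) (J : V → V) (X : V) : ℝ :=
  -codiff E nab (fund k J) (J X)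

/-- A family is orthonormal with respect to k. -/
def Orthonormal' {ι : Type*} [DecidableEq ι] (k : V → V → ℝ) (E : ι → V) : Prop :=
  ∀ i j, k (E i) (E j) = if i = j then 1 else 0

/-- k is an inner product: symmetric, bilinear, positive definite. -/
def IsInner (k : V → V → ℝ) : Prop :=
  IsBilinMap k ∧ (∀ u v, k u v = k v u) ∧ (∀ u, u ≠ 0 → 0 < k u u)

/-- A Hermitian structure on the Lie algebra (V, l). -/
def IsHermitian (l : V → V → V) (J : V → V) (k : V → V → ℝ) : Prop :=
  IsInner k ∧ (∀ u, J (J u) = -u) ∧ (∀ u v, nijenhuis l J u v = 0) ∧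
  (∀ u v, k (J u) (J v) = k u v)

end TCPDefs
set_option linter.unusedSectionVars false
section Aux

variable {V V₁ V₂ W : Type*} [AddCommGroup V] [Module ℝ V]
  [AddCommGroup V₁] [Module ℝ V₁] [AddCommGroup V₂] [Module ℝ V₂]
  [AddCommGroup W] [Module ℝ W]

lemma IsBilinMap.zl {f : V₁ → V₂ → W} (h : IsBilinMap f) (z : V₂) : f 0 z = 0 := by
  have := h.2.1 0 0 z; simpa using this

lemma IsBilinMap.zr {f : V₁ → V₂ → W} (h : IsBilinMap f) (z : V₁) : f z 0 = 0 := by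
  have := h.2.2.2 0 z 0; simpa using this

lemma IsBilinMap.negl {f : V₁ → V₂ → W} (h : IsBilinMap f) (u : V₁) (w : V₂) :
    f (-u) w = -f u w := by
  have := h.2.1 (-1) u w; simpa using this

lemma IsBilinMap.negr {f : V₁ → V₂ → W} (h : IsBilinMap f) (u : V₁) (w : V₂) :
    f u (-w) = -f u w := by
  have := h.2.2.2 (-1) u w; simpa using this

lemma IsBilinMap.subl {f : V₁ → V₂ → W} (h : IsBilinMap f) (u v : V₁) (w : V₂) :
    f (u - v) w = f u w - f v w := by
  rw [sub_eq_add_neg, h.1, h.negl, sub_eq_add_neg]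

lemma IsBilinMap.subr {f : V₁ → V₂ → W} (h : IsBilinMap f) (u : V₁) (v w : V₂) :
    f u (v - w) = f u v - f u w := by
  rw [sub_eq_add_neg, h.2.2.1, h.negr, sub_eq_add_neg]

lemma IsBilinMap.suml {f : V₁ → V₂ → W} (h : IsBilinMap f) {ι : Type*} (s : Finset ι)
    (g : ι → V₁) (w : V₂) : f (∑ i ∈ s, g i) w = ∑ i ∈ s, f (g i) w := by
  classical
  induction s using Finset.induction_on with
  | empty => simpa using h.zl w
  | insert i s hns ih => rw [Finset.sum_insert hns, Finset.sum_insert hns, h.1, ih]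

lemma lieSelf {l : V → V → V} (h : IsLieBracket l) (u : V) : l u u = 0 := by
  have h1 : l u u = -(l u u) := h.2.1 u u
  have h2 : (2:ℝ) • l u u = 0 := by rw [two_smul]; nth_rewrite 2 [h1]; simp
  have : ((2:ℝ)⁻¹ * 2) • l u u = 0 := by rw [mul_smul, h2, smul_zero]
  simpa using this

lemma koszul {k : V → V → ℝ} {l : V → V → V} {nab : V → V → V}
    (h : IsLeviCivita k l nab) (u v w : V) :
    k (nab u v) w = (k (l u v) w - k (l v w) u - k (l u w) v) / 2 := by
  have := h u v w; linarith

lemma leeForm_eq {ι : Type*} [Fintype ι] (l : V → V → V) (k : V → V → ℝ) (J : V → V)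
    (nab : V → V → V) (hk : IsBilinMap k) (hsym : ∀ u v, k u v = k v u)
    (hJk : ∀ u v, k (J u) (J v) = k u v) (hl0 : ∀ u, l u u = 0)
    (hnab : IsLeviCivita k l nab) (E : ι → V) (X : V) :
    leeForm E nab k J X = ∑ i, (k (l (E i) X) (E i)
      - (k (l (E i) (J X)) (J (E i)) - k (l (J X) (J (E i))) (E i)
        - k (l (E i) (J (E i))) (J X)) / 2) := by
  unfold leeForm codiff fund
  rw [neg_neg]
  refine Finset.sum_congr rfl fun i _ => ?_
  have hA : k (J (nab (E i) (E i))) (J X) = k (nab (E i) (E i)) X := hJk _ _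
  have hB : k (J (E i)) (nab (E i) (J X)) = k (nab (E i) (J X)) (J (E i)) := hsym _ _
  have h1 := koszul hnab (E i) (E i) X
  have h2 := koszul hnab (E i) (J X) (J (E i))
  have h0 : k (l (E i) (E i)) X = 0 := by rw [hl0]; exact hk.zl X
  rw [hA, hB, h1, h2, h0]
  ring

lemma leeForm_zero' {ι : Type*} [Fintype ι] (l : V → V → V) (k : V → V → ℝ) (J : V → V)
    (nab : V → V → V) (hk : IsBilinMap k) (hsym : ∀ u v, k u v = k v u)
    (hJk : ∀ u v, k (J u) (J v) = k u v) (hl : IsLieBracket l)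
    (hJ0 : J 0 = 0) (hnab : IsLeviCivita k l nab) (E : ι → V) :
    leeForm E nab k J 0 = 0 := by
  rw [leeForm_eq l k J nab hk hsym hJk (lieSelf hl) hnab E 0]
  have hz : ∀ u, l u 0 = 0 := fun u => hl.1.zr u
  have hz' : ∀ u, l 0 u = 0 := fun u => hl.1.zl u
  simp [hJ0, hz, hz', hk.zl, hk.zr]

lemma trace_eq_sum {ι : Type*} [Fintype ι] [DecidableEq ι] (k : V → V → ℝ)
    (hk : IsBilinMap k) (b : Module.Basis ι ℝ V) (hb : Orthonormal' k ⇑b)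
    (A : Module.End ℝ V) :
    LinearMap.trace ℝ V A = ∑ j, k (A (b j)) (b j) := by
  rw [LinearMap.trace_eq_matrix_trace ℝ b, Matrix.trace]
  refine Finset.sum_congr rfl fun j _ => ?_
  have : k (A (b j)) (b j) = b.repr (A (b j)) j := by
    calc k (A (b j)) (b j) = k (∑ i, b.repr (A (b j)) i • b i) (b j) := by
          rw [Module.Basis.sum_repr]
      _ = ∑ i, k (b.repr (A (b j)) i • b i) (b j) := hk.suml _ _ _
      _ = ∑ i, b.repr (A (b j)) i * k (b i) (b j) := by
          refine Finset.sum_congr rfl fun i _ => ?_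
          rw [hk.2.1]; simp
      _ = b.repr (A (b j)) j := by
          have hb' : ∀ i j', k (b i) (b j') = if i = j' then 1 else 0 := hb
          simp [hb', mul_ite]
  rw [this, Matrix.diag_apply, LinearMap.toMatrix_apply]

end Aux
/-- a Hermitian twisted cartesian product is balanced iff
θ1 = tr ∘ ρ1 and θ2 = tr ∘ ρ2. -/
theorem balanced_iff_of_twisted_product
    {V₁ V₂ : Type*} [AddCommGroup V₁] [Module ℝ V₁] [FiniteDimensional ℝ V₁]
    [AddCommGroup V₂] [Module ℝ V₂] [FiniteDimensional ℝ V₂]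
    (l1 : V₁ → V₁ → V₁) (l2 : V₂ → V₂ → V₂)
    (hl1 : IsLieBracket l1) (hl2 : IsLieBracket l2)
    (J1 : Module.End ℝ V₁) (J2 : Module.End ℝ V₂)
    (k1 : V₁ → V₁ → ℝ) (k2 : V₂ → V₂ → ℝ)
    (hH1 : IsHermitian l1 (⇑J1) k1) (hH2 : IsHermitian l2 (⇑J2) k2)
    (ρ1 : V₁ →ₗ[ℝ] Module.End ℝ V₂) (ρ2 : V₂ →ₗ[ℝ] Module.End ℝ V₁)
    (hd1 : ∀ x, IsDeriv l2 (ρ1 x)) (hd2 : ∀ a, IsDeriv l1 (ρ2 a))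
    (hrep1 : ∀ x y, ρ1 (l1 x y) = ρ1 x * ρ1 y - ρ1 y * ρ1 x)
    (hrep2 : ∀ a b, ρ2 (l2 a b) = ρ2 a * ρ2 b - ρ2 b * ρ2 a)
    (hcompat : Compat (fun x a => ρ1 x a) (fun a x => ρ2 a x))
    (hcomm1 : ∀ x : V₁, ρ1 x * J2 = J2 * ρ1 x)
    (hcomm2 : ∀ a : V₂, ρ2 a * J1 = J1 * ρ2 a)
    {ι₁ ι₂ : Type*} [Fintype ι₁] [DecidableEq ι₁] [Fintype ι₂] [DecidableEq ι₂]
    (b1 : Module.Basis ι₁ ℝ V₁) (hb1 : Orthonormal' k1 ⇑b1)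
    (b2 : Module.Basis ι₂ ℝ V₂) (hb2 : Orthonormal' k2 ⇑b2)
    (nab1 : V₁ → V₁ → V₁) (hnab1 : IsLeviCivita k1 l1 nab1)
    (nab2 : V₂ → V₂ → V₂) (hnab2 : IsLeviCivita k2 l2 nab2)
    (nab : V₁ × V₂ → V₁ × V₂ → V₁ × V₂)
    (hnab : IsLeviCivita (prodK k1 k2)
      (twBr l1 l2 (fun x a => ρ1 x a) (fun a x => ρ2 a x)) nab)
    :
    (∀ X : V₁ × V₂,
      leeForm (Sum.elim (fun i => ((b1 i : V₁), (0 : V₂)))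
          (fun j => ((0 : V₁), (b2 j : V₂)))) nab (prodK k1 k2)
          (prodJ (⇑J1) (⇑J2)) X = 0) ↔
      ((∀ x : V₁, leeForm (⇑b1) nab1 k1 (⇑J1) x = LinearMap.trace ℝ V₂ (ρ1 x)) ∧
       (∀ a : V₂, leeForm (⇑b2) nab2 k2 (⇑J2) a = LinearMap.trace ℝ V₁ (ρ2 a))) := by
  classical
  obtain ⟨hk1, hJJ1, -, hJk1⟩ := hH1
  obtain ⟨hk2, hJJ2, -, hJk2⟩ := hH2
  have hk1b : IsBilinMap k1 := hk1.1
  have hk2b : IsBilinMap k2 := hk2.1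
  have hk1s : ∀ u v, k1 u v = k1 v u := hk1.2.1
  have hk2s : ∀ u v, k2 u v = k2 v u := hk2.2.1
  set L := twBr l1 l2 (fun x a => ρ1 x a) (fun a x => ρ2 a x) with hLdef
  set K := prodK k1 k2 with hKdef
  set J := prodJ (⇑J1) (⇑J2) with hJdef
  set E : ι₁ ⊕ ι₂ → V₁ × V₂ := Sum.elim (fun i => ((b1 i : V₁), (0 : V₂)))
    (fun j => ((0 : V₁), (b2 j : V₂))) with hEdef
  -- product structure facts
  have hKb : IsBilinMap K := by
    refine ⟨fun u v w => ?_, fun c u w => ?_, fun u v w => ?_, fun c u w => ?_⟩ <;>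
      simp only [hKdef, prodK, Prod.fst_add, Prod.snd_add, Prod.smul_fst, Prod.smul_snd,
        hk1b.1, hk2b.1, hk1b.2.1, hk2b.2.1, hk1b.2.2.1, hk2b.2.2.1, hk1b.2.2.2, hk2b.2.2.2,
        smul_eq_mul] <;> ring
  have hKs : ∀ u v, K u v = K v u := fun u v => by
    simp only [hKdef, prodK]; rw [hk1s, hk2s]
  have hJKJ : ∀ u v, K (J u) (J v) = K u v := fun u v => by
    simp only [hKdef, hJdef, prodK, prodJ]; rw [hJk1, hJk2]
  have hL0 : ∀ u, L u u = 0 := fun u => by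
    simp only [hLdef, twBr]; rw [lieSelf hl1, lieSelf hl2]; simp
  have hneg1 : ∀ u v, k1 (J1 u) v = -(k1 u (J1 v)) := fun u v => by
    conv_lhs => rw [show v = -(J1 (J1 v)) by rw [hJJ1, neg_neg]]
    rw [hk1b.negr, hJk1]
  have hneg2 : ∀ u v, k2 (J2 u) v = -(k2 u (J2 v)) := fun u v => by
    conv_lhs => rw [show v = -(J2 (J2 v)) by rw [hJJ2, neg_neg]]
    rw [hk2b.negr, hJk2]
  -- zero lemmas as ∀-facts for simp
  have hl1zl : ∀ u, l1 0 u = 0 := fun u => hl1.1.zl u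
  have hl1zr : ∀ u, l1 u 0 = 0 := fun u => hl1.1.zr u
  have hl2zl : ∀ u, l2 0 u = 0 := fun u => hl2.1.zl u
  have hl2zr : ∀ u, l2 u 0 = 0 := fun u => hl2.1.zr u
  have hk1zl : ∀ u, k1 0 u = 0 := fun u => hk1b.zl u
  have hk1zr : ∀ u, k1 u 0 = 0 := fun u => hk1b.zr u
  have hk2zl : ∀ u, k2 0 u = 0 := fun u => hk2b.zl u
  have hk2zr : ∀ u, k2 u 0 = 0 := fun u => hk2b.zr u
  have hk1al : ∀ u v w, k1 (u + v) w = k1 u w + k1 v w := fun u v w => hk1b.1 u v w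
  have hk1sl : ∀ u v w, k1 (u - v) w = k1 u w - k1 v w := fun u v w => hk1b.subl u v w
  have hk2al : ∀ u v w, k2 (u + v) w = k2 u w + k2 v w := fun u v w => hk2b.1 u v w
  have hk2sl : ∀ u v w, k2 (u - v) w = k2 u w - k2 v w := fun u v w => hk2b.subl u v w
  -- the key formula: the Lee form of the product
  have key : ∀ (x : V₁) (a : V₂), leeForm E nab K J (x, a)
      = (leeForm (⇑b1) nab1 k1 (⇑J1) x - LinearMap.trace ℝ V₂ (ρ1 x))
        + (leeForm (⇑b2) nab2 k2 (⇑J2) a - LinearMap.trace ℝ V₁ (ρ2 a)) := by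
    intro x a
    have pt1 : ∀ i : ι₁,
        K (L (b1 i, 0) (x, a)) (b1 i, 0)
          - (K (L (b1 i, 0) (J (x, a))) (J (b1 i, 0))
            - K (L (J (x, a)) (J (b1 i, 0))) (b1 i, 0)
            - K (L (b1 i, 0) (J (b1 i, 0))) (J (x, a))) / 2
        = (k1 (l1 (b1 i) x) (b1 i)
            - (k1 (l1 (b1 i) (J1 x)) (J1 (b1 i)) - k1 (l1 (J1 x) (J1 (b1 i))) (b1 i)
              - k1 (l1 (b1 i) (J1 (b1 i))) (J1 x)) / 2)
          - k1 ((ρ2 a) (b1 i)) (b1 i) := by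
      intro i
      have hcom := DFunLike.congr_fun (hcomm2 (J2 a)) (b1 i)
      simp only [Module.End.mul_apply] at hcom
      have hc : k1 ((ρ2 (J2 a)) (J1 (b1 i))) (b1 i)
          = -(k1 ((ρ2 (J2 a)) (b1 i)) (J1 (b1 i))) := by
        rw [hcom, hneg1]
      simp only [hLdef, hKdef, hJdef, twBr, prodJ, prodK, map_zero, LinearMap.zero_apply,
        add_zero, zero_add, sub_zero, zero_sub, hl2zl, hl2zr, hk1zl, hk1zr, hk2zl, hk2zr,
        hk1al, hk1sl]
      rw [hc]; ring
    have pt2 : ∀ j : ι₂,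
        K (L (0, b2 j) (x, a)) (0, b2 j)
          - (K (L (0, b2 j) (J (x, a))) (J (0, b2 j))
            - K (L (J (x, a)) (J (0, b2 j))) (0, b2 j)
            - K (L (0, b2 j) (J (0, b2 j))) (J (x, a))) / 2
        = (k2 (l2 (b2 j) a) (b2 j)
            - (k2 (l2 (b2 j) (J2 a)) (J2 (b2 j)) - k2 (l2 (J2 a) (J2 (b2 j))) (b2 j)
              - k2 (l2 (b2 j) (J2 (b2 j))) (J2 a)) / 2)
          - k2 ((ρ1 x) (b2 j)) (b2 j) := by
      intro j
      have hcom := DFunLike.congr_fun (hcomm1 (J1 x)) (b2 j)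
      simp only [Module.End.mul_apply] at hcom
      have hc : k2 ((ρ1 (J1 x)) (J2 (b2 j))) (b2 j)
          = -(k2 ((ρ1 (J1 x)) (b2 j)) (J2 (b2 j))) := by
        rw [hcom, hneg2]
      simp only [hLdef, hKdef, hJdef, twBr, prodJ, prodK, map_zero, LinearMap.zero_apply,
        add_zero, zero_add, sub_zero, zero_sub, hl1zl, hl1zr, hk1zl, hk1zr, hk2zl, hk2zr,
        hk2al, hk2sl]
      rw [hc]; ring
    rw [leeForm_eq L K J nab hKb hKs hJKJ hL0 hnab E (x, a),
      leeForm_eq l1 k1 (⇑J1) nab1 hk1b hk1s hJk1 (lieSelf hl1) hnab1 (⇑b1) x,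
      leeForm_eq l2 k2 (⇑J2) nab2 hk2b hk2s hJk2 (lieSelf hl2) hnab2 (⇑b2) a,
      trace_eq_sum k2 hk2b b2 hb2 (ρ1 x), trace_eq_sum k1 hk1b b1 hb1 (ρ2 a),
      Fintype.sum_sum_type]
    simp only [hEdef, Sum.elim_inl, Sum.elim_inr]
    simp only [pt1, pt2]
    have A : ∑ i : ι₁, ((k1 (l1 (b1 i) x) (b1 i)
          - (k1 (l1 (b1 i) (J1 x)) (J1 (b1 i)) - k1 (l1 (J1 x) (J1 (b1 i))) (b1 i)
            - k1 (l1 (b1 i) (J1 (b1 i))) (J1 x)) / 2)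
          - k1 ((ρ2 a) (b1 i)) (b1 i))
        = ∑ i : ι₁, (k1 (l1 (b1 i) x) (b1 i)
          - (k1 (l1 (b1 i) (J1 x)) (J1 (b1 i)) - k1 (l1 (J1 x) (J1 (b1 i))) (b1 i)
            - k1 (l1 (b1 i) (J1 (b1 i))) (J1 x)) / 2)
          - ∑ i : ι₁, k1 ((ρ2 a) (b1 i)) (b1 i) := Finset.sum_sub_distrib _ _
    have B : ∑ j : ι₂, ((k2 (l2 (b2 j) a) (b2 j)
          - (k2 (l2 (b2 j) (J2 a)) (J2 (b2 j)) - k2 (l2 (J2 a) (J2 (b2 j))) (b2 j)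
            - k2 (l2 (b2 j) (J2 (b2 j))) (J2 a)) / 2)
          - k2 ((ρ1 x) (b2 j)) (b2 j))
        = ∑ j : ι₂, (k2 (l2 (b2 j) a) (b2 j)
          - (k2 (l2 (b2 j) (J2 a)) (J2 (b2 j)) - k2 (l2 (J2 a) (J2 (b2 j))) (b2 j)
            - k2 (l2 (b2 j) (J2 (b2 j))) (J2 a)) / 2)
          - ∑ j : ι₂, k2 ((ρ1 x) (b2 j)) (b2 j) := Finset.sum_sub_distrib _ _
    rw [A, B]
    ring
  constructor
  · intro h
    have hz2 : leeForm (⇑b2) nab2 k2 (⇑J2) 0 = 0 :=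
      leeForm_zero' l2 k2 (⇑J2) nab2 hk2b hk2s hJk2 hl2 (map_zero J2) hnab2 (⇑b2)
    have hz1 : leeForm (⇑b1) nab1 k1 (⇑J1) 0 = 0 :=
      leeForm_zero' l1 k1 (⇑J1) nab1 hk1b hk1s hJk1 hl1 (map_zero J1) hnab1 (⇑b1)
    constructor
    · intro x
      have hx := h (x, 0)
      rw [key x 0, hz2] at hx
      simp only [map_zero] at hx
      linarith
    · intro a
      have ha := h (0, a)
      rw [key 0 a, hz1] at ha
      simp only [map_zero] at ha
      linarith
  · rintro ⟨h1, h2⟩ ⟨x, a⟩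
    rw [key x a, h1 x, h2 a]
    ring
end

section
/- For a Hermitian twisted cartesian product (g1 ⋈ g2, J, k), the codifferential of the fundamental form ω at an element x ∈ g1 satisfies d*ω(J1 x) = −θ1(x) + tr(ρ1(x)), where θ1 is the Lee form of (g1, J1, k1) and tr(ρ1(x)) is the trace of ρ1(x) ∈ End(g2). -/
open scoped BigOperators

section Aux

variable {V V₁ V₂ W : Type*} [AddCommGroup V] [Module ℝ V]
  [AddCommGroup V₁] [Module ℝ V₁] [AddCommGroup V₂] [Module ℝ V₂]
  [AddCommGroup W] [Module ℝ W]

lemma bilin_zero_left {f : V₁ → V₂ → W} (hf : IsBilinMap f) (z : V₂) : f 0 z = 0 := by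
  have h := hf.2.1 0 0 z
  simpa using h

lemma bilin_zero_right {f : V₁ → V₂ → W} (hf : IsBilinMap f) (x : V₁) : f x 0 = 0 := by
  have h := hf.2.2.2 0 x 0
  simpa using h

lemma bilin_neg_left {f : V₁ → V₂ → W} (hf : IsBilinMap f) (x : V₁) (z : V₂) :
    f (-x) z = -f x z := by
  have h := hf.2.1 (-1) x z
  simpa using h

lemma bilin_neg_right {f : V₁ → V₂ → W} (hf : IsBilinMap f) (x : V₁) (z : V₂) :
    f x (-z) = -f x z := by
  have h := hf.2.2.2 (-1) x z
  simpa using h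

lemma bilin_sum_left {f : V₁ → V₂ → W} (hf : IsBilinMap f) {ι : Type*} (s : Finset ι)
    (g : ι → V₁) (z : V₂) : f (∑ i ∈ s, g i) z = ∑ i ∈ s, f (g i) z := by
  classical
  induction s using Finset.induction with
  | empty => simpa using bilin_zero_left hf z
  | insert a s hx ih =>
      rw [Finset.sum_insert hx, Finset.sum_insert hx, hf.1, ih]

/-- k(l e e, w) = 0 for a skew bracket. -/
lemma k_l_self {k : V → V → ℝ} (hk : IsBilinMap k) {l : V → V → V}
    (hl : ∀ u v, l u v = -l v u) (e w : V) : k (l e e) w = 0 := by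
  have h1 : l e e = - l e e := hl e e
  have h2 : k (l e e) w = k (-(l e e)) w := by rw [← h1]
  rw [bilin_neg_left hk] at h2
  linarith

/-- k(Ju, v) = -k(u, Jv) for a Hermitian pair. -/
lemma kJ_left {k : V → V → ℝ} (hk : IsBilinMap k) {J : V → V}
    (hJJ : ∀ u, J (J u) = -u) (hkJ : ∀ u v, k (J u) (J v) = k u v) (u v : V) :
    k (J u) v = -k u (J v) := by
  have h1 : k (J u) v = k (J u) (-(J (J v))) := by rw [hJJ v, neg_neg]
  rw [bilin_neg_right hk, hkJ] at h1
  exact h1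

/-- Formula for the codifferential of the fundamental form purely in terms of
the bracket, via the Koszul formula. -/
lemma codiff_formula {ι : Type*} [Fintype ι] (k : V → V → ℝ) (l : V → V → V)
    (J : V → V) (nab : V → V → V)
    (hk : IsBilinMap k) (hksymm : ∀ u v, k u v = k v u)
    (hJJ : ∀ u, J (J u) = -u) (hkJ : ∀ u v, k (J u) (J v) = k u v)
    (hlskew : ∀ u v, l u v = -l v u)
    (hnab : IsLeviCivita k l nab) (E : ι → V) (X : V) :
    codiff E nab (fund k J) X =
      ∑ i, (k (l (E i) (J X)) (E i) +
        (k (l (E i) X) (J (E i)) - k (l X (J (E i))) (E i) - k (l (E i) (J (E i))) X) / 2) := by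
  unfold codiff fund
  rw [← Finset.sum_neg_distrib]
  apply Finset.sum_congr rfl
  intro i _
  set e := E i with he
  have h1 := hnab e e (J X)
  have h2 := hnab e X (J e)
  have h3 : k (l e e) (J X) = 0 := k_l_self hk hlskew e (J X)
  have h4 : k (J (nab e e)) X = -k (nab e e) (J X) := kJ_left hk hJJ hkJ _ _
  have h5 : k (J e) (nab e X) = k (nab e X) (J e) := hksymm _ _
  linarith

/-- Trace of an endomorphism via an orthonormal basis. -/
lemma trace_eq_sum_k {ι : Type*} [Fintype ι] [DecidableEq ι]
    (k : V → V → ℝ) (hk : IsBilinMap k) (b : Module.Basis ι ℝ V) (hb : Orthonormal' k ⇑b)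
    (T : Module.End ℝ V) :
    LinearMap.trace ℝ V T = ∑ j, k (T (b j)) (b j) := by
  rw [LinearMap.trace_eq_matrix_trace ℝ b, Matrix.trace]
  apply Finset.sum_congr rfl
  intro j _
  rw [Matrix.diag_apply, LinearMap.toMatrix_apply]
  have hv : ∀ v : V, k v (b j) = b.repr v j := by
    intro v
    conv_lhs => rw [← b.sum_repr v]
    rw [bilin_sum_left hk]
    have : ∀ i, k (b.repr v i • b i) (b j) = b.repr v i * (if i = j then 1 else 0) := by
      intro i
      rw [hk.2.1, hb i j, smul_eq_mul]
    simp only [this, mul_ite, mul_one, mul_zero, Finset.sum_ite_eq', Finset.mem_univ, if_true]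
  rw [← hv]

end Aux

/-- codifferential of the fundamental form of a Hermitian
twisted cartesian product evaluated at J1 x. -/
theorem codiff_at_J1x_of_twisted_product
    {V₁ V₂ : Type*} [AddCommGroup V₁] [Module ℝ V₁] [FiniteDimensional ℝ V₁]
    [AddCommGroup V₂] [Module ℝ V₂] [FiniteDimensional ℝ V₂]
    (l1 : V₁ → V₁ → V₁) (l2 : V₂ → V₂ → V₂)
    (hl1 : IsLieBracket l1) (hl2 : IsLieBracket l2)
    (J1 : Module.End ℝ V₁) (J2 : Module.End ℝ V₂)
    (k1 : V₁ → V₁ → ℝ) (k2 : V₂ → V₂ → ℝ)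
    (hH1 : IsHermitian l1 (⇑J1) k1) (hH2 : IsHermitian l2 (⇑J2) k2)
    (ρ1 : V₁ →ₗ[ℝ] Module.End ℝ V₂) (ρ2 : V₂ →ₗ[ℝ] Module.End ℝ V₁)
    (hd1 : ∀ x, IsDeriv l2 (ρ1 x)) (hd2 : ∀ a, IsDeriv l1 (ρ2 a))
    (hrep1 : ∀ x y, ρ1 (l1 x y) = ρ1 x * ρ1 y - ρ1 y * ρ1 x)
    (hrep2 : ∀ a b, ρ2 (l2 a b) = ρ2 a * ρ2 b - ρ2 b * ρ2 a)
    (hcompat : Compat (fun x a => ρ1 x a) (fun a x => ρ2 a x))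
    (hcomm1 : ∀ x : V₁, ρ1 x * J2 = J2 * ρ1 x)
    (hcomm2 : ∀ a : V₂, ρ2 a * J1 = J1 * ρ2 a)
    {ι₁ ι₂ : Type*} [Fintype ι₁] [DecidableEq ι₁] [Fintype ι₂] [DecidableEq ι₂]
    (b1 : Module.Basis ι₁ ℝ V₁) (hb1 : Orthonormal' k1 ⇑b1)
    (b2 : Module.Basis ι₂ ℝ V₂) (hb2 : Orthonormal' k2 ⇑b2)
    (nab1 : V₁ → V₁ → V₁) (hnab1 : IsLeviCivita k1 l1 nab1)
    (nab2 : V₂ → V₂ → V₂) (hnab2 : IsLeviCivita k2 l2 nab2)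
    (nab : V₁ × V₂ → V₁ × V₂ → V₁ × V₂)
    (hnab : IsLeviCivita (prodK k1 k2)
      (twBr l1 l2 (fun x a => ρ1 x a) (fun a x => ρ2 a x)) nab)
    :
    ∀ x : V₁,
      codiff (Sum.elim (fun i => ((b1 i : V₁), (0 : V₂)))
          (fun j => ((0 : V₁), (b2 j : V₂)))) nab
          (fund (prodK k1 k2) (prodJ (⇑J1) (⇑J2))) ((J1 x, 0) : V₁ × V₂) =
        -leeForm (⇑b1) nab1 k1 (⇑J1) x + LinearMap.trace ℝ V₂ (ρ1 x) := by
  intro x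
  -- basic facts
  have hk1b : IsBilinMap k1 := hH1.1.1
  have hk2b : IsBilinMap k2 := hH2.1.1
  have hk1s := hH1.1.2.1
  have hk2s := hH2.1.2.1
  have hJJ1 := hH1.2.1
  have hJJ2 := hH2.2.1
  have hkJ1 := hH1.2.2.2
  have hkJ2 := hH2.2.2.2
  have hl1b : IsBilinMap l1 := hl1.1
  have hl2b : IsBilinMap l2 := hl2.1
  have hl1s := hl1.2.1
  have hl2s := hl2.2.1
  -- product structure facts
  set lP : V₁ × V₂ → V₁ × V₂ → V₁ × V₂ :=
    twBr l1 l2 (fun x a => ρ1 x a) (fun a x => ρ2 a x) with hlP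
  set kP : V₁ × V₂ → V₁ × V₂ → ℝ := prodK k1 k2 with hkP
  set JP : V₁ × V₂ → V₁ × V₂ := prodJ (⇑J1) (⇑J2) with hJP
  have hkPb : IsBilinMap kP := by
    refine ⟨?_, ?_, ?_, ?_⟩
    · intro u v w; simp only [hkP, prodK, Prod.fst_add, Prod.snd_add, hk1b.1, hk2b.1]; ring
    · intro c u w; simp only [hkP, prodK, Prod.smul_fst, Prod.smul_snd, hk1b.2.1, hk2b.2.1,
        smul_eq_mul]; ring
    · intro u v w; simp only [hkP, prodK, Prod.fst_add, Prod.snd_add, hk1b.2.2.1, hk2b.2.2.1]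
      ring
    · intro c u w; simp only [hkP, prodK, Prod.smul_fst, Prod.smul_snd, hk1b.2.2.2,
        hk2b.2.2.2, smul_eq_mul]; ring
  have hkPs : ∀ u v, kP u v = kP v u := by
    intro u v; simp only [hkP, prodK, hk1s u.1 v.1, hk2s u.2 v.2]
  have hJJP : ∀ u, JP (JP u) = -u := by
    intro u
    simp only [hJP, prodJ, hJJ1, hJJ2]
    rfl
  have hkJP : ∀ u v, kP (JP u) (JP v) = kP u v := by
    intro u v; simp only [hkP, hJP, prodK, prodJ, hkJ1, hkJ2]
  have hlPs : ∀ u v, lP u v = -lP v u := by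
    intro u v
    simp only [hlP, twBr, Prod.neg_mk, Prod.mk.injEq]
    constructor
    · rw [hl1s u.1 v.1]; abel
    · rw [hl2s u.2 v.2]; abel
  -- rewrite both codifferentials via the formula
  rw [codiff_formula kP lP JP nab hkPb hkPs hJJP hkJP hlPs hnab]
  unfold leeForm
  rw [codiff_formula k1 l1 (⇑J1) nab1 hk1b hk1s hJJ1 hkJ1 hl1s hnab1, neg_neg]
  rw [Fintype.sum_sum_type]
  -- zero lemmas
  have hl1z : ∀ z : V₁, l1 0 z = 0 := fun z => bilin_zero_left hl1b z
  have hl1z' : ∀ z : V₁, l1 z 0 = 0 := fun z => bilin_zero_right hl1b z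
  have hl2z : ∀ z : V₂, l2 0 z = 0 := fun z => bilin_zero_left hl2b z
  have hl2z' : ∀ z : V₂, l2 z 0 = 0 := fun z => bilin_zero_right hl2b z
  have hk1z : ∀ z : V₁, k1 0 z = 0 := fun z => bilin_zero_left hk1b z
  have hk1z' : ∀ z : V₁, k1 z 0 = 0 := fun z => bilin_zero_right hk1b z
  have hk2z : ∀ z : V₂, k2 0 z = 0 := fun z => bilin_zero_left hk2b z
  have hk2z' : ∀ z : V₂, k2 z 0 = 0 := fun z => bilin_zero_right hk2b z
  have hρ1z : ∀ a : V₂, ρ1 (0 : V₁) a = 0 := by intro a; rw [map_zero]; rfl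
  have hρ2z : ∀ y : V₁, ρ2 (0 : V₂) y = 0 := by intro y; rw [map_zero]; rfl
  have hρ1zr : ∀ y : V₁, ρ1 y (0 : V₂) = 0 := fun y => map_zero (ρ1 y)
  have hρ2zr : ∀ a : V₂, ρ2 a (0 : V₁) = 0 := fun a => map_zero (ρ2 a)
  -- first sum equals the V₁ codifferential part
  have hA : (∑ i : ι₁,
      (kP (lP ((Sum.elim (fun i => ((b1 i : V₁), (0 : V₂)))
            (fun j => ((0 : V₁), (b2 j : V₂)))) (Sum.inl i)) (JP (J1 x, 0)))
          ((Sum.elim (fun i => ((b1 i : V₁), (0 : V₂)))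
            (fun j => ((0 : V₁), (b2 j : V₂)))) (Sum.inl i)) +
        (kP (lP ((Sum.elim (fun i => ((b1 i : V₁), (0 : V₂)))
            (fun j => ((0 : V₁), (b2 j : V₂)))) (Sum.inl i)) (J1 x, 0))
            (JP ((Sum.elim (fun i => ((b1 i : V₁), (0 : V₂)))
            (fun j => ((0 : V₁), (b2 j : V₂)))) (Sum.inl i))) -
          kP (lP (J1 x, 0) (JP ((Sum.elim (fun i => ((b1 i : V₁), (0 : V₂)))
            (fun j => ((0 : V₁), (b2 j : V₂)))) (Sum.inl i))))
            ((Sum.elim (fun i => ((b1 i : V₁), (0 : V₂)))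
            (fun j => ((0 : V₁), (b2 j : V₂)))) (Sum.inl i)) -
          kP (lP ((Sum.elim (fun i => ((b1 i : V₁), (0 : V₂)))
            (fun j => ((0 : V₁), (b2 j : V₂)))) (Sum.inl i))
            (JP ((Sum.elim (fun i => ((b1 i : V₁), (0 : V₂)))
            (fun j => ((0 : V₁), (b2 j : V₂)))) (Sum.inl i)))) (J1 x, 0)) / 2)) =
      ∑ i : ι₁, (k1 (l1 (b1 i) (J1 (J1 x))) (b1 i) +
        (k1 (l1 (b1 i) (J1 x)) (J1 (b1 i)) - k1 (l1 (J1 x) (J1 (b1 i))) (b1 i) -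
          k1 (l1 (b1 i) (J1 (b1 i))) (J1 x)) / 2) := by
    apply Finset.sum_congr rfl
    intro i _
    simp only [Sum.elim_inl, hlP, hkP, hJP, twBr, prodK, prodJ, map_zero, LinearMap.zero_apply,
      hl1z, hl1z', hl2z, hl2z', hk1z, hk1z', hk2z, hk2z', hρ1z, hρ2z, hρ1zr, hρ2zr,
      add_zero, zero_add, sub_zero, zero_sub, neg_zero]
  -- second sum equals the trace
  have hB : (∑ j : ι₂,
      (kP (lP ((Sum.elim (fun i => ((b1 i : V₁), (0 : V₂)))
            (fun j => ((0 : V₁), (b2 j : V₂)))) (Sum.inr j)) (JP (J1 x, 0)))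
          ((Sum.elim (fun i => ((b1 i : V₁), (0 : V₂)))
            (fun j => ((0 : V₁), (b2 j : V₂)))) (Sum.inr j)) +
        (kP (lP ((Sum.elim (fun i => ((b1 i : V₁), (0 : V₂)))
            (fun j => ((0 : V₁), (b2 j : V₂)))) (Sum.inr j)) (J1 x, 0))
            (JP ((Sum.elim (fun i => ((b1 i : V₁), (0 : V₂)))
            (fun j => ((0 : V₁), (b2 j : V₂)))) (Sum.inr j))) -
          kP (lP (J1 x, 0) (JP ((Sum.elim (fun i => ((b1 i : V₁), (0 : V₂)))
            (fun j => ((0 : V₁), (b2 j : V₂)))) (Sum.inr j))))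
            ((Sum.elim (fun i => ((b1 i : V₁), (0 : V₂)))
            (fun j => ((0 : V₁), (b2 j : V₂)))) (Sum.inr j)) -
          kP (lP ((Sum.elim (fun i => ((b1 i : V₁), (0 : V₂)))
            (fun j => ((0 : V₁), (b2 j : V₂)))) (Sum.inr j))
            (JP ((Sum.elim (fun i => ((b1 i : V₁), (0 : V₂)))
            (fun j => ((0 : V₁), (b2 j : V₂)))) (Sum.inr j)))) (J1 x, 0)) / 2)) =
      LinearMap.trace ℝ V₂ (ρ1 x) := by
    rw [trace_eq_sum_k k2 hk2b b2 hb2 (ρ1 x)]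
    apply Finset.sum_congr rfl
    intro j _
    have hJ1x : J1 (J1 x) = -x := hJJ1 x
    have hcomm : ρ1 (J1 x) (J2 (b2 j)) = J2 (ρ1 (J1 x) (b2 j)) := by
      have h := congrArg (fun T : Module.End ℝ V₂ => T (b2 j)) (hcomm1 (J1 x))
      simpa using h
    have hcancel : k2 (ρ1 (J1 x) (J2 (b2 j))) (b2 j) = -k2 (ρ1 (J1 x) (b2 j)) (J2 (b2 j)) := by
      rw [hcomm]
      exact kJ_left hk2b hJJ2 hkJ2 _ _
    simp only [Sum.elim_inr, hlP, hkP, hJP, twBr, prodK, prodJ, map_zero, LinearMap.zero_apply,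
      hJ1x, map_neg, LinearMap.neg_apply,
      hl1z, hl1z', hl2z, hl2z', hk1z, hk1z', hk2z, hk2z', hρ1z, hρ2z, hρ1zr, hρ2zr,
      add_zero, zero_add, sub_zero, zero_sub, sub_neg_eq_add, neg_zero]
    rw [bilin_neg_left hk2b, hcancel]
    ring
  rw [hA, hB]
end
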